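/- Let 𝓛 be the Lindblad generator on M_N(ℂ) associated with a Hermitian matrix H and matrices L_1, …, L_m. If λ ∈ ℂ is an eigenvalue of 𝓛 viewed as a ℂ-linear endomorphism of M_N(ℂ) — i.e. there exists X ∈ M_N(ℂ), X ≠ 0, with 𝓛(X) = λ·X — then Re(λ) ≤ 0. -/

import Mathlib

open Matrix

noncomputable section

/-- The Lindblad generator associated with a Hamiltonian `H` and noise operators
`L 1, …, L m`:  `𝓛(ρ) = −i[H,ρ] + Σ_k (L_k ρ L_k† − ½(L_k† L_k ρ + ρ L_k† L_k))`. -/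
def lindblad {N m : ℕ} (H : Matrix (Fin N) (Fin N) ℂ)
    (L : Fin m → Matrix (Fin N) (Fin N) ℂ) :
    Matrix (Fin N) (Fin N) ℂ →ₗ[ℂ] Matrix (Fin N) (Fin N) ℂ :=
  (-Complex.I) • (LinearMap.mulLeft ℂ H - LinearMap.mulRight ℂ H)
    + ∑ k : Fin m,
      ((LinearMap.mulRight ℂ (L k)ᴴ).comp (LinearMap.mulLeft ℂ (L k))
        - (1 / 2 : ℂ) •
          (LinearMap.mulLeft ℂ ((L k)ᴴ * L k) + LinearMap.mulRight ℂ ((L k)ᴴ * L k)))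

namespace LindbladAux

variable {N m : ℕ}

/-- The Heisenberg-picture (adjoint) generator. -/
def heis (H : Matrix (Fin N) (Fin N) ℂ) (L : Fin m → Matrix (Fin N) (Fin N) ℂ) :
    Matrix (Fin N) (Fin N) ℂ →ₗ[ℂ] Matrix (Fin N) (Fin N) ℂ :=
  Complex.I • (LinearMap.mulLeft ℂ H - LinearMap.mulRight ℂ H)
    + ∑ k : Fin m,
      ((LinearMap.mulLeft ℂ (L k)ᴴ).comp (LinearMap.mulRight ℂ (L k))
        - (1 / 2 : ℂ) •
          (LinearMap.mulLeft ℂ ((L k)ᴴ * L k) + LinearMap.mulRight ℂ ((L k)ᴴ * L k)))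

lemma heis_apply (H : Matrix (Fin N) (Fin N) ℂ) (L : Fin m → Matrix (Fin N) (Fin N) ℂ)
    (A : Matrix (Fin N) (Fin N) ℂ) :
    heis H L A = Complex.I • (H * A - A * H)
      + ∑ k : Fin m, ((L k)ᴴ * (A * L k)
          - (1/2 : ℂ) • ((L k)ᴴ * L k * A + A * ((L k)ᴴ * L k))) := by
  simp [heis, LinearMap.sum_apply, mul_assoc]

lemma lindblad_apply' (H : Matrix (Fin N) (Fin N) ℂ) (L : Fin m → Matrix (Fin N) (Fin N) ℂ)
    (B : Matrix (Fin N) (Fin N) ℂ) :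
    lindblad H L B = (-Complex.I) • (H * B - B * H)
      + ∑ k : Fin m, (L k * B * (L k)ᴴ
          - (1/2 : ℂ) • ((L k)ᴴ * L k * B + B * ((L k)ᴴ * L k))) := by
  simp [lindblad, LinearMap.sum_apply, mul_assoc]

lemma tcyc1 (L A B : Matrix (Fin N) (Fin N) ℂ) :
    (Lᴴ * (Aᴴ * (L * B))).trace = (Aᴴ * (L * (B * Lᴴ))).trace := by
  rw [trace_mul_comm]; simp [mul_assoc]

lemma tcyc2 (M A B : Matrix (Fin N) (Fin N) ℂ) :
    (M * (Aᴴ * B)).trace = (Aᴴ * (B * M)).trace := by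
  rw [trace_mul_comm]; simp [mul_assoc]

lemma adj_k (L A B : Matrix (Fin N) (Fin N) ℂ) :
    ((Lᴴ * (A * L) - (1/2:ℂ) • (Lᴴ * L * A + A * (Lᴴ * L)))ᴴ * B).trace
      = (Aᴴ * (L * B * Lᴴ - (1/2:ℂ) • (Lᴴ * L * B + B * (Lᴴ * L)))).trace := by
  simp only [conjTranspose_sub, conjTranspose_smul, conjTranspose_add, conjTranspose_mul,
    conjTranspose_conjTranspose, sub_mul, add_mul, smul_mul_assoc, mul_sub, mul_add,
    mul_smul_comm, trace_sub, trace_add, trace_smul, mul_assoc, star_div₀, star_one, star_ofNat]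
  rw [tcyc1]
  rw [show Lᴴ * (L * (Aᴴ * B)) = Lᴴ * L * (Aᴴ * B) from (mul_assoc _ _ _).symm, tcyc2]
  rw [tcyc2]

lemma adj_ham (H : Matrix (Fin N) (Fin N) ℂ) (hH : H.IsHermitian)
    (A B : Matrix (Fin N) (Fin N) ℂ) :
    ((Complex.I • (H * A - A * H))ᴴ * B).trace
      = (Aᴴ * ((-Complex.I) • (H * B - B * H))).trace := by
  simp only [conjTranspose_smul, conjTranspose_sub, conjTranspose_mul, hH.eq,
    Complex.star_def, Complex.conj_I, sub_mul, smul_mul_assoc, mul_sub, mul_smul_comm,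
    trace_smul, trace_sub, mul_assoc]
  rw [tcyc2]

lemma adj_pair (H : Matrix (Fin N) (Fin N) ℂ) (hH : H.IsHermitian)
    (L : Fin m → Matrix (Fin N) (Fin N) ℂ) (A B : Matrix (Fin N) (Fin N) ℂ) :
    ((heis H L A)ᴴ * B).trace = (Aᴴ * lindblad H L B).trace := by
  rw [heis_apply, lindblad_apply']
  simp only [conjTranspose_add, conjTranspose_sum, add_mul, Finset.sum_mul, mul_add,
    Finset.mul_sum, trace_add, trace_sum]
  rw [adj_ham H hH]
  congr 1
  exact Finset.sum_congr rfl fun k _ => adj_k (L k) A B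

open ComplexOrder in
lemma trace_ctm_self_eq_zero {X : Matrix (Fin N) (Fin N) ℂ}
    (h : (Xᴴ * X).trace = 0) : X = 0 := by
  have hd : ∀ j, (Xᴴ * X).diag j = dotProduct (star (fun i => X i j)) (fun i => X i j) := by
    intro j; simp [Matrix.diag_apply, Matrix.mul_apply, dotProduct, conjTranspose_apply, mul_comm]
  have hnn : ∀ j ∈ (Finset.univ : Finset (Fin N)), (0:ℂ) ≤ (Xᴴ * X).diag j := fun j _ => by
    rw [hd j]; exact dotProduct_star_self_nonneg _
  rw [Matrix.trace] at h
  have hz := (Finset.sum_eq_zero_iff_of_nonneg hnn).mp h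
  ext i j
  have := (dotProduct_star_self_eq_zero).mp ((hd j).symm.trans (hz j (Finset.mem_univ j)))
  simpa using congr_fun this i

lemma exists_heis_eig (H : Matrix (Fin N) (Fin N) ℂ) (hH : H.IsHermitian)
    (L : Fin m → Matrix (Fin N) (Fin N) ℂ) (lam : ℂ) (X : Matrix (Fin N) (Fin N) ℂ)
    (hX : X ≠ 0) (heig : lindblad H L X = lam • X) :
    ∃ Y : Matrix (Fin N) (Fin N) ℂ, Y ≠ 0 ∧
      heis H L Y = (starRingEnd ℂ lam) • Y := by
  by_contra hcon
  push_neg at hcon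
  set T : Matrix (Fin N) (Fin N) ℂ →ₗ[ℂ] Matrix (Fin N) (Fin N) ℂ :=
    heis H L - (starRingEnd ℂ lam) • LinearMap.id with hT
  have hinj : Function.Injective T := by
    rw [← LinearMap.ker_eq_bot, LinearMap.ker_eq_bot']
    intro Y hY
    by_contra hY0
    refine (hcon Y hY0) (sub_eq_zero.mp ?_)
    simpa [hT, LinearMap.sub_apply, LinearMap.smul_apply] using hY
  obtain ⟨A, hA⟩ := (LinearMap.injective_iff_surjective.mp hinj) X
  have h0 : ((T A)ᴴ * X).trace = 0 := by
    have h1 : (T A)ᴴ = (heis H L A)ᴴ - lam • Aᴴ := by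
      simp [hT, LinearMap.sub_apply, LinearMap.smul_apply, conjTranspose_smul]
    rw [h1, sub_mul, smul_mul_assoc, trace_sub, trace_smul, adj_pair H hH L A X, heig]
    simp [Matrix.mul_smul, trace_smul]
  rw [hA] at h0
  exact hX (trace_ctm_self_eq_zero h0)

lemma heis_conjTranspose (H : Matrix (Fin N) (Fin N) ℂ) (hH : H.IsHermitian)
    (L : Fin m → Matrix (Fin N) (Fin N) ℂ) (A : Matrix (Fin N) (Fin N) ℂ) :
    heis H L Aᴴ = (heis H L A)ᴴ := by
  rw [heis_apply, heis_apply]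
  simp only [conjTranspose_add, conjTranspose_sum, conjTranspose_smul, conjTranspose_sub,
    conjTranspose_mul, conjTranspose_conjTranspose, hH.eq, Complex.star_def, Complex.conj_I,
    star_div₀, star_one, star_ofNat, mul_assoc]
  congr 1
  · module
  · exact Finset.sum_congr rfl fun k _ => by module

lemma heis_mul (H : Matrix (Fin N) (Fin N) ℂ) (L : Fin m → Matrix (Fin N) (Fin N) ℂ)
    (Y : Matrix (Fin N) (Fin N) ℂ) :
    heis H L (Yᴴ * Y) = heis H L Yᴴ * Y + Yᴴ * heis H L Y
      + ∑ k : Fin m, (L k * Y - Y * L k)ᴴ * (L k * Y - Y * L k) := by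
  have hk : ∀ k : Fin m, ∀ L : Matrix (Fin N) (Fin N) ℂ,
      Lᴴ * (Yᴴ * Y * L) - (1/2:ℂ) • (Lᴴ * L * (Yᴴ * Y) + Yᴴ * Y * (Lᴴ * L))
      = (Lᴴ * (Yᴴ * L) - (1/2:ℂ) • (Lᴴ * L * Yᴴ + Yᴴ * (Lᴴ * L))) * Y
        + Yᴴ * (Lᴴ * (Y * L) - (1/2:ℂ) • (Lᴴ * L * Y + Y * (Lᴴ * L)))
        + (L * Y - Y * L)ᴴ * (L * Y - Y * L) := by
    intro _ L
    simp only [conjTranspose_sub, conjTranspose_mul, sub_mul, mul_sub, add_mul, mul_add,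
      smul_mul_assoc, mul_smul_comm, smul_add, smul_sub, mul_assoc]
    module
  have hham : Complex.I • (H * (Yᴴ * Y) - Yᴴ * Y * H)
      = (Complex.I • (H * Yᴴ - Yᴴ * H)) * Y + Yᴴ * (Complex.I • (H * Y - Y * H)) := by
    simp only [smul_sub, sub_mul, mul_sub, smul_mul_assoc, mul_smul_comm, mul_assoc]
    module
  rw [heis_apply, heis_apply, heis_apply]
  rw [show (∑ k : Fin m, ((L k)ᴴ * (Yᴴ * Y * L k)
        - (1/2:ℂ) • ((L k)ᴴ * L k * (Yᴴ * Y) + Yᴴ * Y * ((L k)ᴴ * L k))))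
      = ∑ k : Fin m, (((L k)ᴴ * (Yᴴ * L k) - (1/2:ℂ) • ((L k)ᴴ * L k * Yᴴ + Yᴴ * ((L k)ᴴ * L k))) * Y
        + Yᴴ * ((L k)ᴴ * (Y * L k) - (1/2:ℂ) • ((L k)ᴴ * L k * Y + Y * ((L k)ᴴ * L k)))
        + (L k * Y - Y * L k)ᴴ * (L k * Y - Y * L k))
      from Finset.sum_congr rfl fun k _ => hk k (L k), hham]
  simp only [Finset.sum_add_distrib, add_mul, mul_add, Finset.sum_mul, Finset.mul_sum]
  abel

end LindbladAux

open LindbladAux in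
open ComplexOrder in
/-- Every eigenvalue of a Lindblad generator, viewed as a `ℂ`-linear endomorphism of
`M_N(ℂ)`, has nonpositive real part. -/
theorem lindblad_eigenvalue_re_nonpos {N m : ℕ}
    (H : Matrix (Fin N) (Fin N) ℂ) (hH : H.IsHermitian)
    (L : Fin m → Matrix (Fin N) (Fin N) ℂ)
    (lam : ℂ) (X : Matrix (Fin N) (Fin N) ℂ) (hX : X ≠ 0)
    (heig : lindblad H L X = lam • X) :
    lam.re ≤ 0 := by
  rcases Nat.eq_zero_or_pos N with hN | hN
  · subst hN
    exact absurd (by ext i j; exact i.elim0) hX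
  haveI : Nonempty (Fin N) := ⟨⟨0, hN⟩⟩
  obtain ⟨Y, hY0, hYe⟩ := exists_heis_eig H hH L lam X hX heig
  set P : Matrix (Fin N) (Fin N) ℂ := Yᴴ * Y with hPdef
  have hPsd : P.PosSemidef := posSemidef_conjTranspose_mul_self Y
  have hHer : P.IsHermitian := hPsd.1
  obtain ⟨i0, hi0⟩ := Finite.exists_max hHer.eigenvalues
  set c : ℝ := hHer.eigenvalues i0 with hc
  set v : Fin N → ℂ := ⇑(hHer.eigenvectorBasis i0) with hv
  have hPv : P *ᵥ v = (c:ℂ) • v := by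
    have h := hHer.mulVec_eigenvectorBasis i0
    rw [hv, ← hc] at *
    rw [h]
    ext i; simp [Pi.smul_apply, Complex.real_smul]
  have hvv : dotProduct (star v) v = 1 := by
    have h1 : (inner ℂ (hHer.eigenvectorBasis i0) (hHer.eigenvectorBasis i0) : ℂ) = 1 := by
      rw [inner_self_eq_norm_sq_to_K, hHer.eigenvectorBasis.orthonormal.1 i0]; norm_num
    rw [EuclideanSpace.inner_eq_star_dotProduct, dotProduct_comm] at h1
    exact h1
  have hcpos : 0 < c := by
    by_contra hle
    push_neg at hle
    have hall : ∀ i, hHer.eigenvalues i = 0 := fun i =>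
      le_antisymm ((hi0 i).trans hle) (hPsd.eigenvalues_nonneg i)
    have hP0 : P = 0 := by
      conv_lhs => rw [hHer.spectral_theorem]
      simp [Function.comp_def, hall]
    exact hY0 (by rwa [hPdef, conjTranspose_mul_self_eq_zero] at hP0)
  have hgap : (0:Fin N → ℂ) ≤ fun i => (c:ℂ) - (hHer.eigenvalues i : ℂ) := by
    intro i
    simp only [Pi.zero_apply]
    rw [← Complex.ofReal_sub]
    exact_mod_cast sub_nonneg.mpr (hi0 i)
  have hU : (hHer.eigenvectorUnitary : Matrix (Fin N) (Fin N) ℂ)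
      * star (hHer.eigenvectorUnitary : Matrix (Fin N) (Fin N) ℂ) = 1 :=
    (Matrix.mem_unitaryGroup_iff).mp (hHer.eigenvectorUnitary).2
  have key : (hHer.eigenvectorUnitary : Matrix (Fin N) (Fin N) ℂ)
      * diagonal (fun i => (c:ℂ) - (hHer.eigenvalues i : ℂ))
      * star (hHer.eigenvectorUnitary : Matrix (Fin N) (Fin N) ℂ)
      = (c:ℂ) • 1 - P := by
    have hd : diagonal (fun i : Fin N => (c:ℂ) - (hHer.eigenvalues i : ℂ))
        = (c:ℂ) • 1 - diagonal (Complex.ofReal ∘ hHer.eigenvalues) := by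
      rw [smul_one_eq_diagonal, ← diagonal_sub]; rfl
    rw [hd, mul_sub, sub_mul]
    conv_rhs => rw [hHer.spectral_theorem]
    congr 1
    simp only [mul_smul_comm, smul_mul_assoc, mul_one, hU]
  have hshift : ((c:ℂ) • (1:Matrix (Fin N) (Fin N) ℂ) - P).PosSemidef := by
    rw [← key, Matrix.star_eq_conjTranspose]
    exact (Matrix.PosSemidef.diagonal hgap).mul_mul_conjTranspose_same _
  have hbound : ∀ w : Fin N → ℂ,
      (dotProduct (star w) (P *ᵥ w)).re ≤ c * (dotProduct (star w) w).re := by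
    intro w
    have h := hshift.re_dotProduct_nonneg w
    rw [sub_mulVec, smul_mulVec, one_mulVec, dotProduct_sub, dotProduct_smul] at h
    simp only [RCLike.re_to_complex, Complex.sub_re, smul_eq_mul, Complex.re_ofReal_mul] at h
    linarith
  have hq2 : ∀ w : Fin N → ℂ,
      dotProduct (star v) (P *ᵥ w) = (c:ℂ) * dotProduct (star v) w := by
    intro w
    rw [dotProduct_mulVec]
    have hvP : star v ᵥ* P = (c:ℂ) • star v := by
      have h1 : star (P *ᵥ v) = star v ᵥ* Pᴴ := star_mulVec P v
      rw [hHer.eq] at h1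
      rw [← h1, hPv]
      ext i
      simp [Complex.conj_ofReal]
    rw [hvP, smul_dotProduct, smul_eq_mul]
  -- the quadratic form as a linear functional
  set Q : Matrix (Fin N) (Fin N) ℂ →ₗ[ℂ] ℂ :=
    { toFun := fun M => dotProduct (star v) (M *ᵥ v)
      map_add' := fun A B => by simp [add_mulVec, dotProduct_add]
      map_smul' := fun r A => by
        simp [smul_mulVec, dotProduct_smul, smul_eq_mul] } with hQdef
  have hQapp : ∀ M : Matrix (Fin N) (Fin N) ℂ, Q M = dotProduct (star v) (M *ᵥ v) :=
    fun _ => rfl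
  have hQP : Q P = (c:ℂ) := by
    rw [hQapp, hPv, dotProduct_smul, hvv, smul_eq_mul, mul_one]
  -- eigen equations
  have hYH : heis H L Yᴴ = lam • Yᴴ := by
    rw [heis_conjTranspose H hH, hYe, conjTranspose_smul]
    simp
  -- lower bound
  have hPY : heis H L P = lam • P + (starRingEnd ℂ lam) • P
      + ∑ k : Fin m, (L k * Y - Y * L k)ᴴ * (L k * Y - Y * L k) := by
    have h := heis_mul H L Y
    rw [hYH, hYe] at h
    rw [hPdef]
    rw [h, smul_mul_assoc, mul_smul_comm]
  have hlow : 2 * lam.re * c ≤ (Q (heis H L P)).re := by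
    rw [hPY]
    rw [map_add, map_add, _root_.map_smul, _root_.map_smul, map_sum, hQP]
    have hterm : ∀ k : Fin m,
        0 ≤ (Q ((L k * Y - Y * L k)ᴴ * (L k * Y - Y * L k))).re := by
      intro k
      set C := L k * Y - Y * L k with hC
      have : Q (Cᴴ * C) = dotProduct (star (C *ᵥ v)) (C *ᵥ v) := by
        rw [hQapp, ← mulVec_mulVec, dotProduct_mulVec, ← star_mulVec]
      rw [this]
      have h0 : (0:ℂ) ≤ dotProduct (star (C *ᵥ v)) (C *ᵥ v) :=
        dotProduct_star_self_nonneg _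
      exact (Complex.le_def.mp h0).1
    have hsum : 0 ≤ (∑ k : Fin m, Q ((L k * Y - Y * L k)ᴴ * (L k * Y - Y * L k))).re := by
      rw [Complex.re_sum]
      exact Finset.sum_nonneg fun k _ => hterm k
    have hmain : ((lam • (c:ℂ) + (starRingEnd ℂ lam) • (c:ℂ)).re) = 2 * lam.re * c := by
      simp only [smul_eq_mul, ← add_mul, Complex.add_conj, ← Complex.ofReal_mul,
        Complex.ofReal_re]
    rw [Complex.add_re, hmain]
    linarith
  -- upper bound
  have hup : (Q (heis H L P)).re ≤ 0 := by
    rw [heis_apply, map_add, _root_.map_smul, map_sum]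
    have hham : Q (H * P - P * H) = 0 := by
      have q1 : Q (H * P) = (c:ℂ) * (star v ⬝ᵥ H *ᵥ v) := by
        rw [hQapp, ← mulVec_mulVec v H P, hPv, mulVec_smul, dotProduct_smul, smul_eq_mul]
      have q2 : Q (P * H) = (c:ℂ) * (star v ⬝ᵥ H *ᵥ v) := by
        rw [hQapp, ← mulVec_mulVec v P H, hq2]
      rw [map_sub, q1, q2, sub_self]
    rw [hham, smul_zero, zero_add, Complex.re_sum]
    refine Finset.sum_nonpos fun k _ => ?_
    rw [map_sub, _root_.map_smul]
    set w : Fin N → ℂ := L k *ᵥ v with hw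
    have e1 : Q ((L k)ᴴ * (P * L k)) = dotProduct (star w) (P *ᵥ w) := by
      rw [hQapp, ← mulVec_mulVec, ← mulVec_mulVec, dotProduct_mulVec, ← star_mulVec]
    have e2 : Q ((L k)ᴴ * L k * P) = (c:ℂ) * dotProduct (star w) w := by
      rw [hQapp, ← mulVec_mulVec, ← mulVec_mulVec, hPv, mulVec_smul, mulVec_smul,
        dotProduct_smul, smul_eq_mul, dotProduct_mulVec, ← star_mulVec]
    have e3 : Q (P * ((L k)ᴴ * L k)) = (c:ℂ) * dotProduct (star w) w := by
      rw [hQapp, ← mulVec_mulVec, hq2, ← mulVec_mulVec, dotProduct_mulVec, ← star_mulVec]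
    rw [map_add, e1, e2, e3]
    have hb := hbound w
    have hrw : ((1/2:ℂ) • ((c:ℂ) * dotProduct (star w) w + (c:ℂ) * dotProduct (star w) w))
        = (c:ℂ) * dotProduct (star w) w := by
      rw [smul_eq_mul]; ring
    rw [hrw, Complex.sub_re, Complex.re_ofReal_mul]
    linarith
  nlinarith [hlow.trans hup, hcpos]
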